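/- If F is a (2,3)-spread of V(7,2), then every 6-dimensional subspace U of V(7,2) contains exactly 45 members of F (i.e., exactly 45 members of F are subspaces of U). -/

import Mathlib

abbrev V72 := Fin 7 → ZMod 2

/-- `F` is a (2,3)-spread of `V(7,2)`. -/
def IsSpread23 (F : Set (Submodule (ZMod 2) V72)) : Prop :=
  (∀ S ∈ F, Module.finrank (ZMod 2) S = 3) ∧
  ∀ s : Submodule (ZMod 2) V72, Module.finrank (ZMod 2) s = 2 →
    ∃! S, S ∈ F ∧ s ≤ S

set_option maxRecDepth 10000
set_option maxHeartbeats 1000000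
set_option linter.constructorNameAsVariable false

open Module Submodule Finset

namespace SpreadAux

open scoped Classical

instance : Finite (Submodule (ZMod 2) V72) :=
  Finite.of_injective (fun s => (s : Set V72)) SetLike.coe_injective

noncomputable instance : Fintype (Submodule (ZMod 2) V72) := Fintype.ofFinite _

/-- Elements of a submodule, as a finset. -/
noncomputable def elems (W : Submodule (ZMod 2) V72) : Finset V72 :=
  Finset.univ.filter (· ∈ W)

lemma mem_elems {W : Submodule (ZMod 2) V72} {x : V72} : x ∈ elems W ↔ x ∈ W := by
  simp [elems]

lemma card_elems (W : Submodule (ZMod 2) V72) :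
    (elems W).card = 2 ^ (Module.finrank (ZMod 2) W) := by
  have h1 : (elems W).card = Fintype.card {x : V72 // x ∈ W} :=
    (Fintype.card_subtype _).symm
  have h2 : Fintype.card {x : V72 // x ∈ W} = Nat.card {x : V72 // x ∈ W} :=
    (Nat.card_eq_fintype_card).symm
  have h3 : Nat.card W = 2 ^ (Module.finrank (ZMod 2) W) := by
    rw [Nat.card_eq_fintype_card, card_eq_pow_finrank (K := ZMod 2), ZMod.card]
  rw [h1, h2]
  exact h3

/-- Ordered pairs of distinct nonzero elements of `W`. -/
noncomputable def pairs (W : Submodule (ZMod 2) V72) : Finset (V72 × V72) :=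
  Finset.univ.filter
    (fun p => p.1 ∈ W ∧ p.2 ∈ W ∧ p.1 ≠ 0 ∧ p.2 ≠ 0 ∧ p.1 ≠ p.2)

lemma mem_pairs {W : Submodule (ZMod 2) V72} {p : V72 × V72} :
    p ∈ pairs W ↔ p.1 ∈ W ∧ p.2 ∈ W ∧ p.1 ≠ 0 ∧ p.2 ≠ 0 ∧ p.1 ≠ p.2 := by
  simp [pairs]

lemma pairs_card (W : Submodule (ZMod 2) V72) :
    (pairs W).card =
      (2 ^ (Module.finrank (ZMod 2) W) - 1) * (2 ^ (Module.finrank (ZMod 2) W) - 2) := by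
  set N := 2 ^ (Module.finrank (ZMod 2) W) with hN
  have hzero : (0 : V72) ∈ elems W := mem_elems.2 (zero_mem W)
  have hcard : (elems W).card = N := card_elems W
  have hNpos : 1 ≤ N := Nat.one_le_two_pow
  have hmaps : ∀ p ∈ pairs W, p.1 ∈ (elems W).erase 0 := by
    intro p hp
    rw [mem_pairs] at hp
    exact Finset.mem_erase.2 ⟨hp.2.2.1, mem_elems.2 hp.1⟩
  rw [Finset.card_eq_sum_card_fiberwise hmaps]
  have hfiber : ∀ a ∈ (elems W).erase 0,
      ((pairs W).filter (fun p => p.1 = a)).card = N - 2 := by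
    intro a ha
    obtain ⟨ha0, haW⟩ := Finset.mem_erase.1 ha
    have haW' : a ∈ W := mem_elems.1 haW
    have : (pairs W).filter (fun p => p.1 = a) = {a} ×ˢ (((elems W).erase 0).erase a) := by
      ext p
      simp only [Finset.mem_filter, mem_pairs, Finset.mem_product, Finset.mem_singleton,
        Finset.mem_erase, mem_elems]
      constructor
      · rintro ⟨⟨h1, h2, h3, h4, h5⟩, h6⟩
        subst h6
        exact ⟨rfl, fun h => h5 h.symm, h4, h2⟩
      · rintro ⟨h1, h2, h3, h4⟩
        subst h1
        exact ⟨⟨haW', h4, ha0, h3, fun h => h2 h.symm⟩, rfl⟩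
    rw [this, Finset.card_product, Finset.card_singleton, one_mul,
      Finset.card_erase_of_mem (Finset.mem_erase.2 ⟨ha0, haW⟩),
      Finset.card_erase_of_mem hzero, hcard]
    omega
  rw [Finset.sum_congr rfl hfiber, Finset.sum_const, smul_eq_mul,
    Finset.card_erase_of_mem hzero, hcard]

lemma finrank_span_pair {a b : V72} (ha : a ≠ 0) (hb : b ≠ 0) (hab : a ≠ b) :
    Module.finrank (ZMod 2) (span (ZMod 2) {a, b}) = 2 := by
  have key : ∀ x y : ZMod 2, x + y = 0 → x = y := by decide
  have hli : LinearIndependent (ZMod 2) ![a, b] := by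
    rw [LinearIndependent.pair_iff]
    intro s t hst
    fin_cases s <;> fin_cases t
    · exact ⟨rfl, rfl⟩
    · exfalso; apply hb
      change (0 : ZMod 2) • a + (1 : ZMod 2) • b = 0 at hst
      simpa using hst
    · exfalso; apply ha
      change (1 : ZMod 2) • a + (0 : ZMod 2) • b = 0 at hst
      simpa using hst
    · exfalso
      apply hab
      change (1 : ZMod 2) • a + (1 : ZMod 2) • b = 0 at hst
      have hab0 : a + b = 0 := by simpa using hst
      funext i
      exact key _ _ (congrFun hab0 i)
  have h := finrank_span_eq_card (R := ZMod 2) hli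
  have hr : Set.range ![a, b] = {a, b} := by
    simp only [Matrix.range_cons, Matrix.range_empty, Set.union_empty, Set.union_singleton]
    exact Set.pair_comm b a
  rw [hr] at h
  simpa using h

/-- The 2-dimensional subspaces contained in `W`, as a finset. -/
noncomputable def subs (W : Submodule (ZMod 2) V72) : Finset (Submodule (ZMod 2) V72) :=
  Finset.univ.filter (fun s => Module.finrank (ZMod 2) s = 2 ∧ s ≤ W)

lemma mem_subs {W s : Submodule (ZMod 2) V72} :
    s ∈ subs W ↔ Module.finrank (ZMod 2) s = 2 ∧ s ≤ W := by
  simp [subs]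

lemma span_mem_subs {W : Submodule (ZMod 2) V72} {p : V72 × V72} (hp : p ∈ pairs W) :
    span (ZMod 2) {p.1, p.2} ∈ subs W := by
  rw [mem_pairs] at hp
  obtain ⟨h1, h2, h3, h4, h5⟩ := hp
  refine mem_subs.2 ⟨finrank_span_pair h3 h4 h5, ?_⟩
  rw [span_le]
  rintro x (rfl | rfl) <;> assumption

lemma fiber_eq {W s : Submodule (ZMod 2) V72} (hs : s ∈ subs W) :
    (pairs W).filter (fun p => span (ZMod 2) {p.1, p.2} = s) = pairs s := by
  obtain ⟨hrank, hle⟩ := mem_subs.1 hs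
  ext p
  rw [Finset.mem_filter, mem_pairs, mem_pairs]
  constructor
  · rintro ⟨⟨h1, h2, h3, h4, h5⟩, h6⟩
    refine ⟨?_, ?_, h3, h4, h5⟩
    · rw [← h6]; exact subset_span (by simp)
    · rw [← h6]; exact subset_span (by simp)
  · rintro ⟨h1, h2, h3, h4, h5⟩
    have hsp : span (ZMod 2) {p.1, p.2} ≤ s := by
      rw [span_le]; rintro x (rfl | rfl) <;> assumption
    have heq : span (ZMod 2) {p.1, p.2} = s :=
      Submodule.eq_of_le_of_finrank_eq hsp (by rw [finrank_span_pair h3 h4 h5, hrank])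
    exact ⟨⟨hle h1, hle h2, h3, h4, h5⟩, heq⟩

lemma six_mul_subs_card (W : Submodule (ZMod 2) V72) :
    6 * (subs W).card =
      (2 ^ (Module.finrank (ZMod 2) W) - 1) * (2 ^ (Module.finrank (ZMod 2) W) - 2) := by
  have h1 : (pairs W).card = ∑ s ∈ subs W, ((pairs W).filter (fun p => span (ZMod 2) {p.1, p.2} = s)).card :=
    Finset.card_eq_sum_card_fiberwise (fun p hp => span_mem_subs hp)
  rw [← pairs_card, h1]
  have hfib : ∀ s ∈ subs W,
      ((pairs W).filter (fun p => span (ZMod 2) {p.1, p.2} = s)).card = 6 := by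
    intro s hs
    rw [fiber_eq hs, pairs_card, (mem_subs.1 hs).1]
    norm_num
  rw [Finset.sum_congr rfl hfib, Finset.sum_const, smul_eq_mul, mul_comm]

lemma subs_card (W : Submodule (ZMod 2) V72) {d n : ℕ}
    (hd : Module.finrank (ZMod 2) W = d) (hn : 6 * n = (2 ^ d - 1) * (2 ^ d - 2)) :
    (subs W).card = n := by
  have h := six_mul_subs_card W
  rw [hd] at h
  omega

lemma finrank_V72 : Module.finrank (ZMod 2) V72 = 7 :=
  Module.finrank_fin_fun _

end SpreadAux

open SpreadAux in
theorem spread23_hyperplane_count (F : Set (Submodule (ZMod 2) V72)) (hF : IsSpread23 F)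
    (U : Submodule (ZMod 2) V72) (hU : Module.finrank (ZMod 2) U = 6) :
    {S ∈ F | S ≤ U}.ncard = 45 := by
  classical
  obtain ⟨h3, h2⟩ := hF
  have hFfin : F.Finite := Set.toFinite F
  set FS : Finset (Submodule (ZMod 2) V72) := hFfin.toFinset with hFS
  have hFSmem : ∀ S, S ∈ FS ↔ S ∈ F := fun S => hFfin.mem_toFinset
  -- the map sending a 2-dimensional subspace to the unique spread member containing it
  set f : Submodule (ZMod 2) V72 → Submodule (ZMod 2) V72 :=
    fun s => if h : Module.finrank (ZMod 2) s = 2 then (h2 s h).choose else ⊥ with hf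
  have hfmem : ∀ s : Submodule (ZMod 2) V72, Module.finrank (ZMod 2) s = 2 → f s ∈ F ∧ s ≤ f s := by
    intro s hs
    simp only [hf, dif_pos hs]
    exact (h2 s hs).choose_spec.1
  have hfuniq : ∀ s : Submodule (ZMod 2) V72, Module.finrank (ZMod 2) s = 2 → ∀ S ∈ F, s ≤ S → S = f s := by
    intro s hs S hSF hsS
    simp only [hf, dif_pos hs]
    exact (h2 s hs).choose_spec.2 S ⟨hSF, hsS⟩
  -- counting all 2-dimensional subspaces : |F| = 381
  have hstep1 : (subs ⊤).card = 7 * FS.card := by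
    have hmaps : ∀ s ∈ subs ⊤, f s ∈ FS := by
      intro s hs
      exact (hFSmem _).2 (hfmem s (mem_subs.1 hs).1).1
    have h1 : (subs ⊤).card = ∑ S ∈ FS, ((subs ⊤).filter (fun s => f s = S)).card :=
      Finset.card_eq_sum_card_fiberwise hmaps
    rw [h1]
    have hfib : ∀ S ∈ FS, ((subs ⊤).filter (fun s => f s = S)).card = 7 := by
      intro S hSFS
      have hSF : S ∈ F := (hFSmem _).1 hSFS
      have hfibeq : (subs ⊤).filter (fun s => f s = S) = subs S := by
        ext s
        rw [Finset.mem_filter, mem_subs, mem_subs]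
        constructor
        · rintro ⟨⟨hr, -⟩, hfs⟩
          exact ⟨hr, hfs ▸ (hfmem s hr).2⟩
        · rintro ⟨hr, hle⟩
          exact ⟨⟨hr, le_top⟩, (hfuniq s hr S hSF hle).symm⟩
      rw [hfibeq]
      exact subs_card S (h3 S hSF) (by norm_num)
    rw [Finset.sum_congr rfl hfib, Finset.sum_const, smul_eq_mul]
    ring
  have hcard_top : (subs ⊤).card = 2667 :=
    subs_card ⊤ (by rw [finrank_top, finrank_V72]) (by norm_num)
  have hFcard : FS.card = 381 := by omega
  -- counting 2-dimensional subspaces of U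
  have hstep2 : (subs U).card =
      7 * (FS.filter (fun S => S ≤ U)).card + (FS.filter (fun S => ¬ S ≤ U)).card := by
    have hmaps : ∀ s ∈ subs U, f s ∈ FS := by
      intro s hs
      exact (hFSmem _).2 (hfmem s (mem_subs.1 hs).1).1
    have h1 : (subs U).card = ∑ S ∈ FS, ((subs U).filter (fun s => f s = S)).card :=
      Finset.card_eq_sum_card_fiberwise hmaps
    rw [h1]
    have hfibeq : ∀ S ∈ FS, (subs U).filter (fun s => f s = S) = subs (S ⊓ U) := by
      intro S hSFS
      have hSF : S ∈ F := (hFSmem _).1 hSFS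
      ext s
      rw [Finset.mem_filter, mem_subs, mem_subs]
      constructor
      · rintro ⟨⟨hr, hle⟩, hfs⟩
        exact ⟨hr, le_inf (hfs ▸ (hfmem s hr).2) hle⟩
      · rintro ⟨hr, hle⟩
        exact ⟨⟨hr, hle.trans inf_le_right⟩,
          (hfuniq s hr S hSF (hle.trans inf_le_left)).symm⟩
    have hfib : ∀ S ∈ FS,
        ((subs U).filter (fun s => f s = S)).card = if S ≤ U then 7 else 1 := by
      intro S hSFS
      have hSF : S ∈ F := (hFSmem _).1 hSFS
      rw [hfibeq S hSFS]
      by_cases hSU : S ≤ U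
      · rw [if_pos hSU, inf_eq_left.2 hSU]
        exact subs_card S (h3 S hSF) (by norm_num)
      · rw [if_neg hSU]
        -- the intersection is 2-dimensional
        have hsup : S ⊔ U = ⊤ := by
          have hlt : U < S ⊔ U := by
            refine lt_of_le_of_ne le_sup_right ?_
            intro h
            apply hSU
            rw [h]
            exact le_sup_left
          have h1 : Module.finrank (ZMod 2) U < Module.finrank (ZMod 2) (S ⊔ U : Submodule (ZMod 2) V72) :=
            Submodule.finrank_lt_finrank_of_lt hlt
          have h2' : Module.finrank (ZMod 2) (S ⊔ U : Submodule (ZMod 2) V72) ≤ 7 := by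
            have h := Submodule.finrank_le (S ⊔ U : Submodule (ZMod 2) V72)
            rwa [finrank_V72] at h
          exact Submodule.eq_top_of_finrank_eq (by rw [finrank_V72]; omega)
        have hdim : Module.finrank (ZMod 2) (S ⊓ U : Submodule (ZMod 2) V72) = 2 := by
          have := Submodule.finrank_sup_add_finrank_inf_eq S U
          rw [hsup, finrank_top, finrank_V72, h3 S hSF, hU] at this
          omega
        exact subs_card _ hdim (by norm_num)
    rw [Finset.sum_congr rfl hfib, Finset.sum_ite, Finset.sum_const, Finset.sum_const,
      smul_eq_mul, smul_eq_mul, mul_comm, mul_one]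
  have hcard_U : (subs U).card = 651 := subs_card U hU (by norm_num)
  have hsplit : (FS.filter (fun S => S ≤ U)).card + (FS.filter (fun S => ¬ S ≤ U)).card
      = FS.card := Finset.card_filter_add_card_filter_not _
  have hgoal : {S ∈ F | S ≤ U} = ↑(FS.filter (fun S => S ≤ U)) := by
    ext S
    simp only [Set.mem_setOf_eq, Finset.coe_filter, hFSmem]
  rw [hgoal, Set.ncard_coe_finset]
  omega
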